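/- In the CESK* machine, the chain of continuation pointers in any reachable state is acyclic: starting from the current continuation and repeatedly following the stored continuation address, one never revisits an address, and the chain terminates at mt. -/

import Mathlib

/- Statement 2: in any reachable CESK* state, the chain of continuation
   pointers is acyclic: following stored continuation addresses never
   revisits an address and terminates at mt. -/

inductive Exp : Type
  | ref : String → Exp
  | lam : String → Exp → Exp
  | app : Exp → Exp → Exp
deriving DecidableEq

def Exp.fv : Exp → List String
  | .ref x => [x]
  | .lam x e => e.fv.filter (· ≠ x)
  | .app e₀ e₁ => e₀.fv ++ e₁.fv

def Exp.Closed (e : Exp) : Prop := e.fv = []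

abbrev Addr := ℕ
abbrev Env := List (String × Addr)
abbrev Clo := Exp × Env

inductive PKont : Type
  | mt
  | ar (e : Exp) (ρ : Env) (a : Addr)
  | fn (v : Exp) (ρ : Env) (a : Addr)

inductive Storable : Type
  | clo (c : Clo)
  | kont (κ : PKont)

abbrev PStore := List (Addr × Storable)
abbrev State := Exp × Env × PStore × PKont

inductive Step : State → State → Prop
  | var {x ρ σ κ a v ρ'} :
      List.lookup x ρ = some a → List.lookup a σ = some (.clo (v, ρ')) →
      Step (.ref x, ρ, σ, κ) (v, ρ', σ, κ)
  | app {e₀ e₁ ρ σ κ} {a : Addr} :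
      List.lookup a σ = none →
      Step (.app e₀ e₁, ρ, σ, κ) (e₀, ρ, (a, .kont κ) :: σ, .ar e₁ ρ a)
  | arg {x e ρ σ e' ρ' a} :
      Step (.lam x e, ρ, σ, .ar e' ρ' a) (e', ρ', σ, .fn (.lam x e) ρ a)
  | beta {x e ρ σ y e' ρ' κ} {b a : Addr} :
      List.lookup b σ = some (.kont κ) →
      List.lookup a σ = none →
      Step (.lam x e, ρ, σ, .fn (.lam y e') ρ' b)
        (e', (y, a) :: ρ', (a, .clo (Exp.lam x e, ρ)) :: σ, κ)

def inject (e : Exp) : State := (e, [], [], .mt)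

def Reachable (e : Exp) (ς : State) : Prop :=
  Relation.ReflTransGen Step (inject e) ς

/-- `Chain σ κ l`: the pointer chain from continuation `κ` through the store
    `σ` is exactly the list of addresses `l`, terminating at `mt`. -/
inductive Chain (σ : PStore) : PKont → List Addr → Prop
  | mt : Chain σ .mt []
  | ar {e ρ a κ' l} :
      List.lookup a σ = some (.kont κ') → Chain σ κ' l →
      Chain σ (.ar e ρ a) (a :: l)
  | fn {v ρ a κ' l} :
      List.lookup a σ = some (.kont κ') → Chain σ κ' l →
      Chain σ (.fn v ρ a) (a :: l)

lemma chain_mem_dom {σ : PStore} {κ : PKont} {l : List Addr} (h : Chain σ κ l) :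
    ∀ a ∈ l, ∃ s, List.lookup a σ = some s := by
  induction h with
  | mt => simp
  | ar h _ ih =>
    intro b hb
    rcases List.mem_cons.1 hb with rfl | hb2
    · exact ⟨_, h⟩
    · exact ih b hb2
  | fn h _ ih =>
    intro b hb
    rcases List.mem_cons.1 hb with rfl | hb2
    · exact ⟨_, h⟩
    · exact ih b hb2

lemma chain_ext {σ : PStore} {a : Addr} (ha : List.lookup a σ = none) (s : Storable)
    {κ : PKont} {l : List Addr} (h : Chain σ κ l) : Chain ((a, s) :: σ) κ l := by
  induction h with
  | mt => exact .mt
  | @ar e ρ b κ' l hb _ ih =>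
    refine .ar ?_ ih
    have hne : b ≠ a := fun hba => by rw [hba, ha] at hb; cases hb
    rw [List.lookup, beq_eq_false_iff_ne.mpr hne]; exact hb
  | @fn v ρ b κ' l hb _ ih =>
    refine .fn ?_ ih
    have hne : b ≠ a := fun hba => by rw [hba, ha] at hb; cases hb
    rw [List.lookup, beq_eq_false_iff_ne.mpr hne]; exact hb

def CInv (σ : PStore) (κ : PKont) : Prop :=
  (∃ l, Chain σ κ l ∧ l.Nodup) ∧
  ∀ b κ', List.lookup b σ = some (.kont κ') → ∃ l, Chain σ κ' l ∧ b ∉ l ∧ l.Nodup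

lemma inv_step {ς ς' : State} (h : Step ς ς') (hinv : CInv ς.2.2.1 ς.2.2.2) :
    CInv ς'.2.2.1 ς'.2.2.2 := by
  obtain ⟨⟨l, hl, hnd⟩, hstore⟩ := hinv
  cases h with
  | var _ _ => exact ⟨⟨l, hl, hnd⟩, hstore⟩
  | @app e₀ e₁ ρ σ κ a ha =>
    constructor
    · refine ⟨a :: l, .ar ?_ (chain_ext ha _ hl), ?_⟩
      · rw [List.lookup, beq_self_eq_true]
      · refine List.nodup_cons.2 ⟨fun hmem => ?_, hnd⟩
        obtain ⟨s, hs⟩ := chain_mem_dom hl a hmem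
        rw [ha] at hs; cases hs
    · intro b κ' hb
      by_cases hba : b = a
      · subst hba
        rw [List.lookup, beq_self_eq_true] at hb
        simp only [Option.some.injEq, Storable.kont.injEq] at hb
        subst hb
        refine ⟨l, chain_ext ha _ hl, fun hmem => ?_, hnd⟩
        obtain ⟨s, hs⟩ := chain_mem_dom hl b hmem
        rw [ha] at hs; cases hs
      · rw [List.lookup, beq_eq_false_iff_ne.mpr hba] at hb
        obtain ⟨l', hl', hbl', hnd'⟩ := hstore b κ' hb
        exact ⟨l', chain_ext ha _ hl', hbl', hnd'⟩
  | arg =>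
    rcases hl with _ | ⟨hb, hl'⟩ | ⟨hb, hl'⟩
    exact ⟨⟨_, .fn hb hl', hnd⟩, hstore⟩
  | @beta x e ρ σ y e' ρ' κ b a hb ha =>
    obtain ⟨l', hl', hbl', hnd'⟩ := hstore b κ hb
    constructor
    · exact ⟨l', chain_ext ha _ hl', hnd'⟩
    · intro c κ' hc
      by_cases hca : c = a
      · subst hca
        rw [List.lookup, beq_self_eq_true] at hc
        simp at hc
      · rw [List.lookup, beq_eq_false_iff_ne.mpr hca] at hc
        obtain ⟨l'', hl'', hcl'', hnd''⟩ := hstore c κ' hc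
        exact ⟨l'', chain_ext ha _ hl'', hcl'', hnd''⟩

theorem pointer_chain_acyclic (e : Exp) (he : e.Closed)
    {exp : Exp} {ρ : Env} {σ : PStore} {κ : PKont}
    (hreach : Reachable e (exp, ρ, σ, κ)) :
    ∃ l : List Addr, Chain σ κ l ∧ l.Nodup := by
  suffices h : CInv σ κ from h.1
  generalize hς : (exp, ρ, σ, κ) = ς at hreach
  have : CInv ς.2.2.1 ς.2.2.2 := by
    clear hς
    induction hreach with
    | refl => exact ⟨⟨[], .mt, List.nodup_nil⟩, fun b κ' h => by simp [List.lookup, inject] at h⟩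
    | tail _ hstep ih => exact inv_step hstep ih
  rw [← hς] at this
  exact this
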